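/- Let x, x₁, …, x_K ∈ [−1,1] be pairwise distinct and let λ_{K,k} = ∏_{l≠k} (x − x_l)/(x_k − x_l) be the Lagrange interpolation coefficients. Then ‖φ_x − Σ_{k=1}^K λ_{K,k} φ_{x_k}‖²_{L²(ℝ,Ĝ)} ≤ (1/(K!)²) · ∏_{k=1}^K |x − x_k|² · ∫_ℝ t^{2K} Ĝ(t) dt. Moreover, if Ĝ(t) ≤ c₀ e^{−c|t|} for all t with constants c₀, c > 0, and |x − x_k| < c/4 for all k, then ‖φ_x − Σ_{k=1}^K λ_{K,k} φ_{x_k}‖²_{L²(ℝ,Ĝ)} ≤ 2 c₀ (2K)! / (c · 4^{2K} (K!)²). -/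

import Mathlib

open MeasureTheory Polynomial Finset Set
open scoped NNReal ENNReal


lemma iterated_rolle : ∀ (n : ℕ) (g : ℝ → ℝ),
    (∀ m, m < n → Differentiable ℝ (iteratedDeriv m g)) →
    ∀ (p : Fin (n + 1) → ℝ), StrictMono p → (∀ i, g (p i) = 0) →
    ∃ ξ, iteratedDeriv n g ξ = 0 := by
  intro n
  induction n with
  | zero => intro g _ p _ hz; exact ⟨p 0, by simpa using hz 0⟩
  | succ n ih =>
    intro g hdiff p hp hz
    have gdiff : Differentiable ℝ g := by simpa using hdiff 0 (by omega)
    have key : ∀ i : Fin (n + 1), ∃ c ∈ Ioo (p i.castSucc) (p i.succ), deriv g c = 0 := by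
      intro i
      refine exists_deriv_eq_zero ?_ (gdiff.continuous.continuousOn) ?_
      · exact hp (Fin.castSucc_lt_succ (i := i))
      · rw [hz, hz]
    choose q hq hq0 using key
    have hqmono : StrictMono q := by
      intro i j hij
      calc q i < p i.succ := (hq i).2
        _ ≤ p j.castSucc := hp.monotone (by
            simp only [Fin.le_def, Fin.val_succ, Fin.coe_castSucc]
            exact hij)
        _ < q j := (hq j).1
    obtain ⟨ξ, hξ⟩ := ih (deriv g) (fun m hm => by
      have := hdiff (m + 1) (by omega)
      rwa [iteratedDeriv_succ'] at this) q hqmono hq0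
    exact ⟨ξ, by rwa [iteratedDeriv_succ']⟩

lemma polyIteratedDeriv (p : Polynomial ℝ) (n : ℕ) :
    iteratedDeriv n (fun y : ℝ => p.eval y) = fun y => (derivative^[n] p).eval y := by
  induction n with
  | zero => simp
  | succ n ih =>
    rw [iteratedDeriv_succ, ih]
    funext y
    rw [Function.iterate_succ_apply']
    exact Polynomial.deriv _

lemma monic_iterate_derivative {p : Polynomial ℝ} (hp : p.Monic) {n : ℕ} (hn : p.natDegree = n) :
    derivative^[n] p = C ((n.factorial : ℝ)) := by
  have h := p.eraseLead_add_C_mul_X_pow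
  rw [hp.leadingCoeff, map_one, one_mul, hn] at h
  have h0 : derivative^[n] p.eraseLead = 0 := by
    rcases p.eraseLead_natDegree_lt_or_eraseLead_eq_zero with h1 | h1
    · exact iterate_derivative_eq_zero (by omega)
    · simp [h1]
  calc derivative^[n] p = derivative^[n] (p.eraseLead + X ^ n) := by rw [h]
    _ = derivative^[n] p.eraseLead + derivative^[n] (X ^ n : ℝ[X]) := by
        rw [iterate_map_add]
    _ = C ((n.factorial : ℝ)) := by
        rw [h0, zero_add, iterate_derivative_X_pow_eq_smul]
        simp [Nat.descFactorial_self, Polynomial.smul_eq_C_mul]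

lemma interp_err (K : ℕ) (x : ℝ) (xs : Fin K → ℝ)
    (hinj : Function.Injective xs) (hne : ∀ k, x ≠ xs k)
    (f : ℝ → ℝ) (hf : ∀ m : ℕ, Differentiable ℝ (iteratedDeriv m f)) (M : ℝ)
    (hM : ∀ y, |iteratedDeriv K f y| ≤ M) :
    |f x - ∑ k, (∏ l ∈ Finset.univ.erase k, (x - xs l) / (xs k - xs l)) * f (xs k)|
      ≤ M / K.factorial * ∏ k, |x - xs k| := by
  rcases Nat.eq_zero_or_pos K with rfl | hK0
  · simpa using hM x
  set E : ℝ := f x - ∑ k, (∏ l ∈ Finset.univ.erase k, (x - xs l) / (xs k - xs l)) * f (xs k)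
    with hE
  set Q : Fin K → ℝ[X] :=
    fun k => ∏ l ∈ Finset.univ.erase k, (C ((xs k - xs l)⁻¹) * (X - C (xs l))) with hQ
  set P : ℝ[X] := ∏ k, (X - C (xs k)) with hP
  set W : ℝ := ∏ k, (x - xs k) with hW
  set A : ℝ[X] := ∑ k, C (f (xs k)) * Q k with hA
  set R : ℝ[X] := C W * A + C E * P with hR
  set g : ℝ → ℝ := fun y => W * f y - R.eval y with hg
  have evalP : ∀ y : ℝ, P.eval y = ∏ k, (y - xs k) := by
    intro y; rw [hP, eval_prod]; simp
  have hAx : ∀ y : ℝ, A.eval y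
      = ∑ k, (∏ l ∈ Finset.univ.erase k, (y - xs l) / (xs k - xs l)) * f (xs k) := by
    intro y
    rw [hA, eval_finset_sum]
    refine Finset.sum_congr rfl fun k _ => ?_
    rw [eval_mul, eval_C, eval_prod, mul_comm]
    congr 1
    refine Finset.prod_congr rfl fun l _ => ?_
    simp [div_eq_inv_mul]
  have hgx : g x = 0 := by
    simp only [hg]
    rw [hR, eval_add, eval_mul, eval_mul, eval_C, eval_C, hAx, evalP, ← hW, hE]
    ring
  have hgk : ∀ k : Fin K, g (xs k) = 0 := by
    intro k
    have hone : (∏ l ∈ Finset.univ.erase k, (xs k - xs l) / (xs k - xs l)) = 1 :=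
      Finset.prod_eq_one fun l hl =>
        div_self (sub_ne_zero.mpr fun h => (Finset.mem_erase.mp hl).1 (hinj h).symm)
    have hz' : ∀ l : Fin K, l ≠ k →
        (∏ m ∈ Finset.univ.erase l, (xs k - xs m) / (xs l - xs m)) * f (xs l) = 0 := by
      intro l hl
      rw [Finset.prod_eq_zero (Finset.mem_erase.mpr ⟨fun h => hl h.symm, Finset.mem_univ _⟩)
        (by rw [sub_self, zero_div]), zero_mul]
    have hPz : (∏ l, (xs k - xs l)) = (0 : ℝ) :=
      Finset.prod_eq_zero (Finset.mem_univ k) (sub_self (xs k))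
    simp only [hg]
    rw [hR, eval_add, eval_mul, eval_mul, eval_C, eval_C, hAx, evalP,
      hPz, mul_zero, add_zero,
      Finset.sum_eq_single k (fun l _ hl => hz' l hl) (fun h => absurd (Finset.mem_univ k) h),
      hone, one_mul, sub_self]
  have hcombo : ∀ m : ℕ,
      iteratedDeriv m g = fun y => W * iteratedDeriv m f y - (derivative^[m] R).eval y := by
    intro m
    induction m with
    | zero => simp [hg]
    | succ m ih =>
      rw [iteratedDeriv_succ, ih]
      funext y
      have h1 : HasDerivAt (fun y => W * iteratedDeriv m f y)
          (W * deriv (iteratedDeriv m f) y) y :=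
        (((hf m) y).hasDerivAt).const_mul W
      have h2 : HasDerivAt (fun y : ℝ => (derivative^[m] R).eval y)
          ((derivative^[m + 1] R).eval y) y := by
        rw [Function.iterate_succ_apply']
        exact Polynomial.hasDerivAt _ y
      refine ((h1.sub h2).deriv).trans ?_
      rw [iteratedDeriv_succ]
  have hgdiff : ∀ m, m < K → Differentiable ℝ (iteratedDeriv m g) := by
    intro m _
    rw [hcombo m]
    exact ((hf m).const_mul W).sub (Polynomial.differentiable _)
  have hxnot : x ∉ Finset.image xs Finset.univ := by
    intro h
    obtain ⟨k, _, hk⟩ := Finset.mem_image.mp h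
    exact hne k hk.symm
  have hcard : (insert x (Finset.image xs Finset.univ)).card = K + 1 := by
    rw [Finset.card_insert_of_notMem hxnot, Finset.card_image_of_injective _ hinj,
      Finset.card_univ, Fintype.card_fin]
  set s : Finset ℝ := insert x (Finset.image xs Finset.univ) with hs
  set p : Fin (K + 1) → ℝ := fun i => ((s.orderIsoOfFin hcard) i : ℝ) with hp
  have hpmono : StrictMono p := fun i j hij =>
    Subtype.coe_lt_coe.mpr ((s.orderIsoOfFin hcard).strictMono hij)
  have hzero : ∀ i, g (p i) = 0 := by
    intro i
    have hm : p i ∈ s := ((s.orderIsoOfFin hcard) i).2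
    rcases Finset.mem_insert.mp hm with h | h
    · rw [h]; exact hgx
    · obtain ⟨k, _, hk⟩ := Finset.mem_image.mp h
      rw [← hk]; exact hgk k
  obtain ⟨ξ, hξ⟩ := iterated_rolle K g hgdiff p hpmono hzero
  rw [hcombo K] at hξ
  have hA0 : derivative^[K] A = 0 := by
    refine iterate_derivative_eq_zero ?_
    have hAle : A.natDegree ≤ K - 1 := by
      refine Polynomial.natDegree_sum_le_of_forall_le _ _ fun k _ => ?_
      refine le_trans (natDegree_mul_le) ?_
      rw [natDegree_C, zero_add]
      refine le_trans (natDegree_prod_le _ _) ?_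
      have hb : ∀ l ∈ Finset.univ.erase k,
          (C ((xs k - xs l)⁻¹) * (X - C (xs l))).natDegree ≤ 1 := by
        intro l _
        refine le_trans natDegree_mul_le ?_
        simp [natDegree_X_sub_C]
      refine le_trans (Finset.sum_le_card_nsmul _ _ 1 hb) ?_
      simp [Finset.card_erase_of_mem]
    omega
  have hPK : derivative^[K] P = C ((K.factorial : ℝ)) := by
    refine monic_iterate_derivative (monic_prod_of_monic _ _ fun k _ => monic_X_sub_C _) ?_
    rw [natDegree_prod _ _ fun k _ => X_sub_C_ne_zero _]
    simp [natDegree_X_sub_C]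
  have hRK : derivative^[K] R = C (E * K.factorial) := by
    rw [hR, iterate_map_add, iterate_derivative_C_mul, iterate_derivative_C_mul, hA0, hPK,
      mul_zero, zero_add, ← C_mul]
  have hfac : (0 : ℝ) < (K.factorial : ℝ) := by positivity
  have hξ' : W * iteratedDeriv K f ξ - E * (K.factorial : ℝ) = 0 := by
    have := hξ
    simp only [hRK, eval_C] at this
    simpa using this
  have hkey : E * (K.factorial : ℝ) = W * iteratedDeriv K f ξ := by linarith
  have habsW : |W| = ∏ k, |x - xs k| := by rw [hW, Finset.abs_prod]
  have e1 : |E| * (K.factorial : ℝ) = |W * iteratedDeriv K f ξ| := by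
    rw [← hkey, abs_mul, Nat.abs_cast]
  rw [div_mul_eq_mul_div, le_div_iff₀ hfac]
  calc |E| * (K.factorial : ℝ) = |W| * |iteratedDeriv K f ξ| := by rw [e1, abs_mul]
    _ ≤ |W| * M := mul_le_mul_of_nonneg_left (hM ξ) (abs_nonneg _)
    _ = M * ∏ k, |x - xs k| := by rw [habsW]; ring

lemma interp_err_complex (K : ℕ) (x : ℝ) (xs : Fin K → ℝ)
    (hinj : Function.Injective xs) (hne : ∀ k, x ≠ xs k) (t : ℝ) :
    ‖Complex.exp (Complex.I * x * t)
        - ∑ k, ((∏ l ∈ Finset.univ.erase k, (x - xs l) / (xs k - xs l) : ℝ) : ℂ)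
            * Complex.exp (Complex.I * xs k * t)‖
      ≤ |t| ^ K / K.factorial * ∏ k, |x - xs k| := by
  set Ec : ℂ := Complex.exp (Complex.I * x * t)
      - ∑ k, ((∏ l ∈ Finset.univ.erase k, (x - xs l) / (xs k - xs l) : ℝ) : ℂ)
          * Complex.exp (Complex.I * xs k * t) with hEcdef
  by_cases hEc : Ec = 0
  · rw [hEc, norm_zero]
    positivity
  set α : ℂ := (starRingEnd ℂ) Ec / (‖Ec‖ : ℂ) with hαdef
  have hEcnorm : (0 : ℝ) < ‖Ec‖ := norm_pos_iff.mpr hEc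
  have hα : ‖α‖ = 1 := by
    rw [hαdef, norm_div, Complex.norm_conj, Complex.norm_real, Real.norm_eq_abs, abs_of_pos hEcnorm,
      div_self hEcnorm.ne']
  set F : ℝ → ℝ := fun y : ℝ => (α * Complex.exp (Complex.I * y * t)).re with hFdef
  have hdF : ∀ (c : ℂ) (y : ℝ),
      HasDerivAt (fun y : ℝ => (c * Complex.exp (Complex.I * y * t)).re)
        ((c * (Complex.I * t) * Complex.exp (Complex.I * y * t)).re) y := by
    intro c y
    have h0 : HasDerivAt (fun y : ℝ => ((y : ℂ))) 1 y := by
      exact Complex.ofRealCLM.hasDerivAt (x := y)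
    have h1 : HasDerivAt (fun y : ℝ => Complex.I * (y : ℂ) * t) (Complex.I * t) y := by
      have := (h0.const_mul Complex.I).mul_const (t : ℂ)
      simpa [mul_comm, mul_assoc, mul_left_comm] using this
    have h3 := (h1.cexp).const_mul c
    have h4 := (Complex.reCLM.hasFDerivAt
      (x := c * Complex.exp (Complex.I * y * t))).comp_hasDerivAt y h3
    have heq : (c * (Complex.I * t) * Complex.exp (Complex.I * y * t)).re
        = Complex.reCLM (c * (Complex.exp (Complex.I * y * t) * (Complex.I * t))) := by
      simp only [Complex.reCLM_apply]
      congr 1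
      ring
    rw [heq]
    exact h4
  have hiter : ∀ n : ℕ, iteratedDeriv n F
      = fun y : ℝ => (α * (Complex.I * t) ^ n * Complex.exp (Complex.I * y * t)).re := by
    intro n
    induction n with
    | zero => funext y; simp [hFdef]
    | succ n ih =>
      rw [iteratedDeriv_succ, ih]
      funext y
      rw [(hdF (α * (Complex.I * t) ^ n) y).deriv]
      congr 1
      ring
  have hdiffF : ∀ m : ℕ, Differentiable ℝ (iteratedDeriv m F) := by
    intro m
    rw [hiter m]
    exact fun y => ((hdF _ y).differentiableAt)
  have hMF : ∀ y, |iteratedDeriv K F y| ≤ |t| ^ K := by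
    intro y
    rw [hiter K]
    refine le_trans (Complex.abs_re_le_norm _) ?_
    rw [norm_mul, norm_mul, norm_pow, norm_mul, Complex.norm_I, Complex.norm_real, Real.norm_eq_abs,
      one_mul, Complex.norm_exp, hα, one_mul]
    have : (Complex.I * y * t).re = 0 := by simp
    rw [this, Real.exp_zero, mul_one]
  have hsum : F x - ∑ k, (∏ l ∈ Finset.univ.erase k, (x - xs l) / (xs k - xs l)) * F (xs k)
      = (α * Ec).re := by
    have expand : α * Ec = α * Complex.exp (Complex.I * x * t)
        - ∑ k, ((∏ l ∈ Finset.univ.erase k, (x - xs l) / (xs k - xs l) : ℝ) : ℂ)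
            * (α * Complex.exp (Complex.I * xs k * t)) := by
      rw [hEcdef, mul_sub, Finset.mul_sum]
      congr 1
      exact Finset.sum_congr rfl fun k _ => by ring
    rw [expand, Complex.sub_re, Complex.re_sum]
    congr 1
    exact Finset.sum_congr rfl fun k _ => by rw [Complex.re_ofReal_mul]
  have hre : (α * Ec).re = ‖Ec‖ := by
    rw [hαdef, div_mul_eq_mul_div, mul_comm ((starRingEnd ℂ) Ec) Ec, Complex.mul_conj]
    rw [← Complex.ofReal_div, Complex.ofReal_re, Complex.normSq_eq_norm_sq,
      pow_two, mul_div_assoc, div_self hEcnorm.ne', mul_one]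
  have hfin := interp_err K x xs hinj hne F hdiffF (|t| ^ K) hMF
  rw [hsum, hre, abs_of_nonneg hEcnorm.le] at hfin
  exact hfin

lemma Lp_coeFn_sum {α ι : Type*} [MeasurableSpace α] {μ : Measure α} (s : Finset ι)
    (g : ι → Lp ℂ 2 μ) :
    ⇑(∑ i ∈ s, g i) =ᵐ[μ] fun t => ∑ i ∈ s, (g i : α → ℂ) t := by
  classical
  induction s using Finset.induction_on with
  | empty =>
    simp only [Finset.sum_empty]
    exact Lp.coeFn_zero (E := ℂ) (p := 2) (μ := μ)
  | insert a s hnot ih =>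
    rw [Finset.sum_insert hnot]
    filter_upwards [Lp.coeFn_add (g a) (∑ i ∈ s, g i), ih] with t h1 h2
    rw [h1]
    simp only [Pi.add_apply, Finset.sum_insert hnot, h2]

lemma integrable_comp_abs {f : ℝ → ℝ} (hf : IntegrableOn f (Ioi 0)) :
    Integrable fun x => f |x| := by
  have int_Ioi : IntegrableOn (fun x => f |x|) (Ioi 0) := by
    refine (integrableOn_congr_fun (fun x hx => ?_) measurableSet_Ioi).mpr hf
    rw [abs_of_pos hx]
  have int_Iic : IntegrableOn (fun x ↦ f |x|) (Iic 0) := by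
    rw [← Measure.map_neg_eq_self (volume : Measure ℝ)]
    have m : MeasurableEmbedding fun x : ℝ => -x := (Homeomorph.neg ℝ).measurableEmbedding
    rw [m.integrableOn_map_iff]
    simp_rw [Function.comp_def, abs_neg, neg_preimage, neg_Iic, neg_zero]
    exact Iff.mpr integrableOn_Ici_iff_integrableOn_Ioi int_Ioi
  have := int_Iic.union int_Ioi
  rwa [Iic_union_Ioi, integrableOn_univ] at this

/-- The polynomial-interpolation bound on the `L²(ℝ, Ĝ)` error of approximating
`φ_x` by the Lagrange combination of `φ_{x_k}`, together with the explicit bound under the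
exponential decay assumption on `Ĝ`. -/
theorem lagrange_approx_bound
    (Ghat : ℝ → ℝ) (hcont : Continuous Ghat) (heven : ∀ t, Ghat (-t) = Ghat t)
    (hpos : ∀ t, 0 < Ghat t) (hint : Integrable Ghat)
    (hmom : ∀ n : ℕ, Integrable (fun t : ℝ => t ^ (2 * n) * Ghat t))
    (μ : Measure ℝ) (hμ : μ = volume.withDensity (fun t => ENNReal.ofReal (Ghat t)))
    (φ : ℝ → Lp ℂ 2 μ)
    (hφ : ∀ x : ℝ, (φ x : ℝ → ℂ) =ᵐ[μ]
      fun t => Complex.exp (Complex.I * (x : ℂ) * (t : ℂ)))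
    (K : ℕ) (x : ℝ) (xs : Fin K → ℝ)
    (hx : x ∈ Set.Icc (-1 : ℝ) 1) (hxs : ∀ k, xs k ∈ Set.Icc (-1 : ℝ) 1)
    (hinj : Function.Injective xs) (hne : ∀ k, x ≠ xs k)
    (lam : Fin K → ℝ)
    (hlam : ∀ k, lam k = ∏ l ∈ Finset.univ.erase k, (x - xs l) / (xs k - xs l)) :
    ‖φ x - ∑ k : Fin K, (lam k : ℂ) • φ (xs k)‖ ^ 2
        ≤ (1 / ((K.factorial : ℝ)) ^ 2) * (∏ k, |x - xs k| ^ 2)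
          * ∫ t : ℝ, t ^ (2 * K) * Ghat t
      ∧ ∀ c₀ c : ℝ, 0 < c₀ → 0 < c →
        (∀ t : ℝ, Ghat t ≤ c₀ * Real.exp (-c * |t|)) →
        (∀ k, |x - xs k| < c / 4) →
        ‖φ x - ∑ k : Fin K, (lam k : ℂ) • φ (xs k)‖ ^ 2
          ≤ 2 * c₀ * ((2 * K).factorial : ℝ) / (c * 4 ^ (2 * K) * ((K.factorial : ℝ)) ^ 2) := by
  have hGm : Measurable fun t => Real.toNNReal (Ghat t) :=
    measurable_real_toNNReal.comp hcont.measurable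
  have hμ' : μ = volume.withDensity (fun t => ((Real.toNNReal (Ghat t) : ℝ≥0) : ℝ≥0∞)) := hμ
  set C : ℝ := (1 / ((K.factorial : ℝ)) ^ 2) * (∏ k, |x - xs k| ^ 2) with hC
  set Ec : ℝ → ℂ := fun t => Complex.exp (Complex.I * x * t)
      - ∑ k, (lam k : ℂ) * Complex.exp (Complex.I * xs k * t) with hEc
  set f : Lp ℂ 2 μ := φ x - ∑ k : Fin K, (lam k : ℂ) • φ (xs k) with hfdef
  -- pointwise bound
  have key : ∀ t : ℝ, ‖Ec t‖ ^ 2 ≤ C * t ^ (2 * K) := by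
    intro t
    have h := interp_err_complex K x xs hinj hne t
    have hlam' : Ec t = Complex.exp (Complex.I * x * t)
        - ∑ k, ((∏ l ∈ Finset.univ.erase k, (x - xs l) / (xs k - xs l) : ℝ) : ℂ)
            * Complex.exp (Complex.I * xs k * t) := by
      rw [hEc]
      simp only
      congr 1
      exact Finset.sum_congr rfl fun k _ => by rw [hlam k]
    rw [← hlam'] at h
    have h2 : ‖Ec t‖ ^ 2 ≤ (|t| ^ K / K.factorial * ∏ k, |x - xs k|) ^ 2 :=
      pow_le_pow_left₀ (norm_nonneg _) h 2
    refine h2.trans (le_of_eq ?_)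
    have e2 : (|t| ^ K) ^ 2 = t ^ (2 * K) := by
      rw [← pow_mul, mul_comm K 2, pow_mul, sq_abs, ← pow_mul]
    have e3 : (∏ k, |x - xs k|) ^ 2 = ∏ k, |x - xs k| ^ 2 := by
      rw [← Finset.prod_pow]
    calc (|t| ^ K / K.factorial * ∏ k, |x - xs k|) ^ 2
        = (1 / ((K.factorial : ℝ)) ^ 2) * ((∏ k, |x - xs k|) ^ 2) * (|t| ^ K) ^ 2 := by ring
      _ = C * t ^ (2 * K) := by rw [e2, e3, hC]
  -- coeFn identification
  have hterm : ∀ k : Fin K, ⇑((lam k : ℂ) • φ (xs k)) =ᵐ[μ]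
      fun t => (lam k : ℂ) * Complex.exp (Complex.I * xs k * t) := by
    intro k
    filter_upwards [Lp.coeFn_smul (lam k : ℂ) (φ (xs k)), hφ (xs k)] with t h1 h2
    rw [h1, Pi.smul_apply, h2, smul_eq_mul]
  have hall : ∀ᵐ t ∂μ, ∀ k : Fin K, ((lam k : ℂ) • φ (xs k) : Lp ℂ 2 μ) t
      = (lam k : ℂ) * Complex.exp (Complex.I * xs k * t) := ae_all_iff.mpr hterm
  have hcoe : ⇑f =ᵐ[μ] Ec := by
    filter_upwards [Lp.coeFn_sub (φ x) (∑ k : Fin K, (lam k : ℂ) • φ (xs k)), hφ x,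
      Lp_coeFn_sum Finset.univ (fun k => (lam k : ℂ) • φ (xs k)), hall] with t h1 h2 h3 h4
    rw [hfdef] at *
    rw [h1, Pi.sub_apply, h2, h3, hEc]
    simp only
    congr 1
    exact Finset.sum_congr rfl fun k _ => h4 k
  -- norm squared as integral
  have hnorm : ‖f‖ ^ 2 = ∫ t, ‖(⇑f) t‖ ^ 2 ∂μ := by
    have h1 : ‖f‖ ^ 2 = RCLike.re (inner ℂ f f : ℂ) := (@inner_self_eq_norm_sq ℂ _ _ _ _ f).symm
    rw [h1, L2.inner_def, ← integral_re (L2.integrable_inner f f)]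
    refine integral_congr_ae (Filter.Eventually.of_forall fun t => ?_)
    exact @inner_self_eq_norm_sq ℂ _ _ _ _ ((⇑f) t)
  -- integrability of the bound wrt μ
  have hbound_int : Integrable (fun t => C * t ^ (2 * K)) μ := by
    rw [hμ']
    rw [integrable_withDensity_iff_integrable_smul hGm]
    have : (fun t => (Real.toNNReal (Ghat t)) • (C * t ^ (2 * K)))
        = fun t => C * (t ^ (2 * K) * Ghat t) := by
      funext t
      simp only [NNReal.smul_def, Real.coe_toNNReal _ (hpos t).le, smul_eq_mul]
      ring
    rw [this]
    exact (hmom K).const_mul C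
  -- monotonicity
  have h2 : ∫ t, ‖(⇑f) t‖ ^ 2 ∂μ ≤ ∫ t, C * t ^ (2 * K) ∂μ := by
    refine integral_mono_of_nonneg (Filter.Eventually.of_forall fun t => by positivity)
      hbound_int ?_
    filter_upwards [hcoe] with t h
    rw [h]
    exact key t
  -- compute the integral
  have h3 : ∫ t, C * t ^ (2 * K) ∂μ = C * ∫ t : ℝ, t ^ (2 * K) * Ghat t := by
    rw [integral_const_mul, hμ', integral_withDensity_eq_integral_smul hGm]
    congr 1
    refine integral_congr_ae (Filter.Eventually.of_forall fun t => ?_)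
    simp only [NNReal.smul_def, Real.coe_toNNReal _ (hpos t).le, smul_eq_mul]
    ring
  have part1 : ‖f‖ ^ 2 ≤ C * ∫ t : ℝ, t ^ (2 * K) * Ghat t := by
    rw [hnorm]
    exact h2.trans (le_of_eq h3)
  constructor
  · exact part1
  · intro c₀ c hc₀ hc hdecay hclose
    set J : ℝ := ∫ t : ℝ, t ^ (2 * K) * Ghat t with hJ
    -- integrability of the exponential bound
    have hf0 : IntegrableOn (fun u : ℝ => u ^ (2 * K) * Real.exp (-c * u)) (Ioi 0) := by
      have hcast : (-1 : ℝ) < ((2 * K : ℕ) : ℝ) := by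
        have := Nat.cast_nonneg (α := ℝ) (2 * K)
        linarith
      have := integrableOn_rpow_mul_exp_neg_mul_rpow hcast (zero_lt_one' ℝ) hc
      refine (integrableOn_congr_fun (fun u hu => ?_) measurableSet_Ioi).mpr this
      rw [Real.rpow_natCast, Real.rpow_one]
    have hexp_int : Integrable (fun t : ℝ => t ^ (2 * K) * Real.exp (-c * |t|)) := by
      refine (integrable_comp_abs hf0).congr (Filter.Eventually.of_forall fun t => ?_)
      simp only
      congr 1
      rw [pow_mul, pow_mul, sq_abs]
    have hJ1 : J ≤ c₀ * ∫ t : ℝ, t ^ (2 * K) * Real.exp (-c * |t|) := by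
      rw [hJ, ← integral_const_mul]
      refine integral_mono_of_nonneg (Filter.Eventually.of_forall fun t => ?_)
        (hexp_int.const_mul c₀) (Filter.Eventually.of_forall fun t => ?_)
      · have hp : (0 : ℝ) ≤ t ^ (2 * K) := by rw [pow_mul]; positivity
        exact mul_nonneg hp (hpos t).le
      · have hp : (0 : ℝ) ≤ t ^ (2 * K) := by rw [pow_mul]; positivity
        calc t ^ (2 * K) * Ghat t
            ≤ t ^ (2 * K) * (c₀ * Real.exp (-c * |t|)) :=
              mul_le_mul_of_nonneg_left (hdecay t) hp
          _ = c₀ * (t ^ (2 * K) * Real.exp (-c * |t|)) := by ring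
    have hIoi : ∫ u in Ioi (0 : ℝ), u ^ (2 * K) * Real.exp (-c * u)
        = (1 / c) ^ (2 * K + 1) * ((2 * K).factorial : ℝ) := by
      have h := Real.integral_rpow_mul_exp_neg_mul_Ioi
        (a := ((2 * K : ℕ) : ℝ) + 1) (r := c) (by positivity) hc
      rw [show ((2 * K : ℕ) : ℝ) + 1 - 1 = ((2 * K : ℕ) : ℝ) by ring] at h
      have heq : ∫ u in Ioi (0 : ℝ), u ^ ((2 * K : ℕ) : ℝ) * Real.exp (-(c * u))
          = ∫ u in Ioi (0 : ℝ), u ^ (2 * K) * Real.exp (-c * u) := by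
        refine setIntegral_congr_fun measurableSet_Ioi fun u hu => ?_
        rw [Real.rpow_natCast, neg_mul]
      rw [heq] at h
      rw [h, Real.Gamma_nat_eq_factorial]
      congr 1
      rw [← Real.rpow_natCast (1 / c) (2 * K + 1)]
      congr 1
      push_cast
      ring
    have hint2 : ∫ t : ℝ, t ^ (2 * K) * Real.exp (-c * |t|)
        = 2 * ((1 / c) ^ (2 * K + 1) * ((2 * K).factorial : ℝ)) := by
      have habs : (fun t : ℝ => t ^ (2 * K) * Real.exp (-c * |t|))
          = fun t : ℝ => (fun u : ℝ => u ^ (2 * K) * Real.exp (-c * u)) |t| := by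
        funext t
        simp only
        congr 1
        rw [pow_mul, pow_mul, sq_abs]
      rw [habs, integral_comp_abs (f := fun u : ℝ => u ^ (2 * K) * Real.exp (-c * u)), hIoi]
    have hP2 : (∏ k, |x - xs k| ^ 2) ≤ (c / 4) ^ (2 * K) := by
      have hle : (∏ k : Fin K, |x - xs k| ^ 2) ≤ ∏ _k : Fin K, (c / 4) ^ 2 :=
        Finset.prod_le_prod (fun k _ => by positivity)
          (fun k _ => pow_le_pow_left₀ (abs_nonneg _) (hclose k).le 2)
      refine hle.trans (le_of_eq ?_)
      rw [Finset.prod_const, Finset.card_univ, Fintype.card_fin, ← pow_mul, mul_comm 2 K]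
    have hJnn : 0 ≤ J :=
      integral_nonneg fun t => mul_nonneg (by rw [pow_mul]; positivity) (hpos t).le
    have hJ2 : J ≤ c₀ * (2 * ((1 / c) ^ (2 * K + 1) * ((2 * K).factorial : ℝ))) := by
      rw [← hint2]
      exact hJ1
    have hKf : ((K.factorial : ℝ)) ≠ 0 := by positivity
    calc ‖f‖ ^ 2 ≤ C * J := part1
      _ = (1 / ((K.factorial : ℝ)) ^ 2) * (∏ k, |x - xs k| ^ 2) * J := by rw [hC]
      _ ≤ (1 / ((K.factorial : ℝ)) ^ 2) * ((c / 4) ^ (2 * K))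
            * (c₀ * (2 * ((1 / c) ^ (2 * K + 1) * ((2 * K).factorial : ℝ)))) := by
          have h1 : (1 / ((K.factorial : ℝ)) ^ 2) * (∏ k, |x - xs k| ^ 2) * J
              ≤ (1 / ((K.factorial : ℝ)) ^ 2) * ((c / 4) ^ (2 * K)) * J := by
            gcongr
          refine h1.trans ?_
          gcongr
      _ = 2 * c₀ * ((2 * K).factorial : ℝ) / (c * 4 ^ (2 * K) * ((K.factorial : ℝ)) ^ 2) := by
          have h4 : (4 : ℝ) ^ (2 * K) ≠ 0 := by positivity
          have hcne : c ≠ 0 := hc.ne'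
          rw [div_pow, div_pow, one_pow, pow_succ]
          field_simp
          ring
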